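/- Let n ≥ 1 and let a, b > 0 be real numbers. Then for every n×n real positive definite matrix P, a · log(det P) + b · trace(P⁻¹) ≥ n · (a · log(b/a) + a), with equality if and only if P = (b/a) • I; that is, P₁* = (b/a) • I is the unique global minimizer of f₁(P) = a · log(det P) + b · trace(P⁻¹) over the cone of positive definite matrices. -/

import Mathlib

open Matrix

private lemma key_scalar (a b x : ℝ) (ha : 0 < a) (hb : 0 < b) (hx : 0 < x) :
    a * Real.log (b / a) + a ≤ a * Real.log x + b / x ∧
      (a * Real.log x + b / x = a * Real.log (b / a) + a ↔ x = b / a) := by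
  set t : ℝ := b / (a * x) with ht_def
  have ht : 0 < t := by positivity
  have hlogx : Real.log x = Real.log (b / a) - Real.log t := by
    have hlt : Real.log t = Real.log (b / a) - Real.log x := by
      rw [ht_def, ← div_div, Real.log_div (ne_of_gt (div_pos hb ha)) hx.ne']
    linarith
  have hbx : b / x = a * t := by
    rw [ht_def]; field_simp
  have hrw : a * Real.log x + b / x - (a * Real.log (b / a) + a)
      = a * (t - 1 - Real.log t) := by
    rw [hlogx, hbx]; ring
  have hle : Real.log t ≤ t - 1 := Real.log_le_sub_one_of_pos ht
  have ht1 : t = 1 ↔ x = b / a := by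
    rw [ht_def, div_eq_one_iff_eq (by positivity)]
    constructor
    · intro h
      field_simp
      linarith
    · intro h
      rw [h]; field_simp
  constructor
  · nlinarith
  · constructor
    · intro h
      rw [← ht1]
      by_contra hne
      have := Real.log_lt_sub_one_of_pos ht hne
      nlinarith
    · intro h
      have h1 : t = 1 := ht1.mpr h
      rw [h1] at hrw
      simp at hrw
      linarith

private lemma diag_const_eq_smul_one {n : ℕ} (c : ℝ) :
    Matrix.diagonal (fun _ : Fin n => c) = c • (1 : Matrix (Fin n) (Fin n) ℝ) := by
  ext i j
  by_cases h : i = j <;> simp [Matrix.diagonal, Matrix.one_apply, h]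

/-- for `a, b > 0`, every positive definite `P` satisfies
`a log det P + b tr P⁻¹ ≥ n (a log (b/a) + a)`, with equality iff `P = (b/a) • I`;
i.e. `(b/a) • I` is the unique global minimizer of `f₁` over the positive definite
cone. -/
theorem f1_global_minimizer {n : ℕ} (hn : 1 ≤ n) (a b : ℝ) (ha : 0 < a) (hb : 0 < b) :
    ∀ P : Matrix (Fin n) (Fin n) ℝ, P.PosDef →
      (n : ℝ) * (a * Real.log (b / a) + a) ≤ a * Real.log P.det + b * (P⁻¹).trace ∧
      (a * Real.log P.det + b * (P⁻¹).trace = (n : ℝ) * (a * Real.log (b / a) + a) ↔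
        P = (b / a) • (1 : Matrix (Fin n) (Fin n) ℝ)) := by
  intro P hP
  have hH : P.IsHermitian := hP.1
  set lam : Fin n → ℝ := hH.eigenvalues with hlam
  have hpos : ∀ i, 0 < lam i := fun i => hP.eigenvalues_pos i
  set U : Matrix (Fin n) (Fin n) ℝ := (hH.eigenvectorUnitary : Matrix (Fin n) (Fin n) ℝ)
    with hU
  have hUU : star U * U = 1 := Unitary.coe_star_mul_self hH.eigenvectorUnitary
  have hUU' : U * star U = 1 := Unitary.coe_mul_star_self hH.eigenvectorUnitary
  have hspec : P = U * Matrix.diagonal lam * star U := by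
    have := hH.spectral_theorem
    simpa [hU, Function.comp] using this
  have hdet : P.det = ∏ i, lam i := by simpa using hH.det_eq_prod_eigenvalues
  have hlogdet : Real.log P.det = ∑ i, Real.log (lam i) := by
    rw [hdet, Real.log_prod fun i _ => (hpos i).ne']
  have hDinv : (Matrix.diagonal lam)⁻¹ = Matrix.diagonal (fun i => (lam i)⁻¹) := by
    apply Matrix.inv_eq_right_inv
    rw [Matrix.diagonal_mul_diagonal,
      show (fun i => lam i * (lam i)⁻¹) = fun _ : Fin n => (1 : ℝ) from
        funext fun i => mul_inv_cancel₀ (hpos i).ne', Matrix.diagonal_one]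
  have hPinv : P⁻¹ = U * Matrix.diagonal (fun i => (lam i)⁻¹) * star U := by
    rw [hspec, Matrix.mul_inv_rev, Matrix.mul_inv_rev,
      Matrix.inv_eq_left_inv hUU, Matrix.inv_eq_left_inv hUU', hDinv, Matrix.mul_assoc]
  have htr : (P⁻¹).trace = ∑ i, (lam i)⁻¹ := by
    rw [hPinv, Matrix.trace_mul_cycle, hUU, Matrix.one_mul, Matrix.trace_diagonal]
  have hterm := fun i => key_scalar a b (lam i) ha hb (hpos i)
  have hsum : a * Real.log P.det + b * (P⁻¹).trace
      = ∑ i, (a * Real.log (lam i) + b / lam i) := by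
    rw [hlogdet, htr, Finset.mul_sum, Finset.mul_sum, ← Finset.sum_add_distrib]
    refine Finset.sum_congr rfl fun i _ => ?_
    rw [div_eq_mul_inv]
  have hnc : (n : ℝ) * (a * Real.log (b / a) + a)
      = ∑ _i : Fin n, (a * Real.log (b / a) + a) := by
    simp [Finset.sum_const]
    ring
  constructor
  · rw [hsum, hnc]
    exact Finset.sum_le_sum fun i _ => (hterm i).1
  constructor
  · intro h
    -- all eigenvalues equal b/a
    have hzero : ∑ i, ((a * Real.log (lam i) + b / lam i)
        - (a * Real.log (b / a) + a)) = 0 := by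
      rw [Finset.sum_sub_distrib, ← hsum, ← hnc, h]
      ring
    have hall : ∀ i ∈ Finset.univ, ((a * Real.log (lam i) + b / lam i)
        - (a * Real.log (b / a) + a)) = 0 := by
      rw [← Finset.sum_eq_zero_iff_of_nonneg (fun i _ => sub_nonneg.mpr (hterm i).1)]
      exact hzero
    have hlameq : ∀ i, lam i = b / a := fun i =>
      (hterm i).2.mp (by linarith [hall i (Finset.mem_univ i)])
    have hdiag : Matrix.diagonal lam = (b / a) • (1 : Matrix (Fin n) (Fin n) ℝ) := by
      rw [show lam = fun _ => b / a from funext hlameq]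
      exact diag_const_eq_smul_one _
    rw [hspec, hdiag, Matrix.mul_smul, Matrix.mul_one, Matrix.smul_mul, hUU']
  · intro h
    have hdetP : P.det = (b / a) ^ n := by
      rw [h, Matrix.det_smul, Matrix.det_one, mul_one, Fintype.card_fin]
    have hinvP : P⁻¹ = (a / b) • (1 : Matrix (Fin n) (Fin n) ℝ) := by
      apply Matrix.inv_eq_right_inv
      rw [h, Matrix.smul_mul, Matrix.mul_smul, Matrix.one_mul, smul_smul]
      rw [show b / a * (a / b) = 1 by field_simp]
      simp
    have htrP : (P⁻¹).trace = (a / b) * n := by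
      rw [hinvP, Matrix.trace_smul, Matrix.trace_one]
      simp [mul_comm]
    rw [hdetP, htrP, Real.log_pow]
    have hba : b * (a / b) = a := by field_simp
    push_cast
    nlinarith [hba]
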